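/- Let H = K_{n,n} − M be the complete bipartite graph on parts U, V of size n with the perfect matching M = {u_i v_i : 1 ≤ i ≤ n} removed. The number of proper partitions of H into exactly k independent sets equals the sum over s = 0 to n of C(n,s) times the sum over j of S(s,j)·S(s, k − n + s − j), where the inner sum is 0 when k − n + s < 0. -/

import Mathlib

/-- Stirling numbers of the second kind. -/
def stirling : ℕ → ℕ → ℕ
  | 0, 0 => 1
  | 0, _ + 1 => 0
  | _ + 1, 0 => 0
  | n + 1, k + 1 => (k + 1) * stirling n (k + 1) + stirling n k

/-- The complete bipartite graph `K_{n,n}` with a perfect matching removed: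
`uᵢ` (i.e. `Sum.inl i`) is adjacent to `vⱼ` (i.e. `Sum.inr j`) iff `i ≠ j`. -/
def bipartiteMinusMatching (n : ℕ) : SimpleGraph (Fin n ⊕ Fin n) :=
  SimpleGraph.fromRel (fun x y =>
    match x, y with
    | Sum.inl i, Sum.inr j => i ≠ j
    | _, _ => False)

open Finset

namespace StirlingAux

variable {α : Type*} [DecidableEq α] {s : Finset α} {a : α}

lemma empty_not_mem (Q : Finpartition s) : ∅ ∉ Q.parts := Q.bot_notMem

lemma part_subset (Q : Finpartition s) {t : Finset α} (ht : t ∈ Q.parts) : t ⊆ s :=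
  Q.le ht

/-- Insert a new element `a` into the part `t` of a partition of `s`. -/
def insertPart (Q : Finpartition s) (ha : a ∉ s) (t : Finset α) (ht : t ∈ Q.parts) :
    Finpartition (insert a s) where
  parts := insert (insert a t) (Q.parts.erase t)
  supIndep := by
    rw [Finset.supIndep_iff_pairwiseDisjoint, coe_insert]
    refine Set.PairwiseDisjoint.insert ?_ ?_
    · exact Q.disjoint.subset (by simpa using fun x hx => mem_of_mem_erase hx)
    · intro u hu hne
      simp only [mem_coe, mem_erase] at hu
      rw [Finset.disjoint_left]
      intro x hx hxu
      rcases mem_insert.1 hx with rfl | hxt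
      · exact ha (part_subset Q hu.2 hxu)
      · exact (Finset.disjoint_left.1 (Q.disjoint ht hu.2 (Ne.symm hu.1)) hxt) hxu
  sup_parts := by
    have h1 := Finset.sup_insert (b := t) (s := Q.parts.erase t) (f := id)
    rw [Finset.insert_erase ht, Q.sup_parts, id_eq] at h1
    rw [Finset.sup_insert, id_eq, Finset.sup_eq_union]
    ext x
    simp only [Finset.mem_insert, Finset.mem_union]
    have h2 := Finset.ext_iff.1 h1 x
    rw [Finset.sup_eq_union, Finset.mem_union] at h2
    tauto
  bot_notMem := by
    intro h
    rcases Finset.mem_insert.1 h with h | h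
    · rw [Finset.bot_eq_empty] at h
      exact (Finset.insert_ne_empty a t) h.symm
    · exact Q.bot_notMem (Finset.mem_of_mem_erase h)

lemma insertPart_parts (Q : Finpartition s) (ha : a ∉ s) (t : Finset α) (ht : t ∈ Q.parts) :
    (insertPart Q ha t ht).parts = insert (insert a t) (Q.parts.erase t) := rfl

lemma insert_not_mem_erase (Q : Finpartition s) (ha : a ∉ s) (t : Finset α) :
    insert a t ∉ Q.parts.erase t := by
  intro h
  exact ha (part_subset Q (mem_of_mem_erase h) (mem_insert_self a t))

lemma card_insertPart (Q : Finpartition s) (ha : a ∉ s) (t : Finset α) (ht : t ∈ Q.parts) :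
    (insertPart Q ha t ht).parts.card = Q.parts.card := by
  rw [insertPart_parts, card_insert_of_notMem (insert_not_mem_erase Q ha t),
    card_erase_of_mem ht]
  have : Q.parts.card ≠ 0 := by
    intro h
    exact notMem_empty t (by rwa [card_eq_zero.1 h] at ht)
  omega

/-- Add `a` as a new singleton part. -/
def insertSingle (Q : Finpartition s) (ha : a ∉ s) : Finpartition (insert a s) :=
  Q.extend (b := {a}) (by simp [Finset.bot_eq_empty]) (by simp [ha])
    (by rw [Finset.sup_eq_union]; ext x; simp [or_comm])

lemma insertSingle_parts (Q : Finpartition s) (ha : a ∉ s) :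
    (insertSingle Q ha).parts = insert {a} Q.parts := rfl

lemma single_not_mem (Q : Finpartition s) (ha : a ∉ s) : ({a} : Finset α) ∉ Q.parts := by
  intro h
  exact ha (part_subset Q h (mem_singleton_self a))

lemma card_insertSingle (Q : Finpartition s) (ha : a ∉ s) :
    (insertSingle Q ha).parts.card = Q.parts.card + 1 := by
  rw [insertSingle_parts, card_insert_of_notMem (single_not_mem Q ha)]

/-- Remove the element `a` from a partition of `insert a s`. -/
def erasePt (P : Finpartition (insert a s)) (ha : a ∉ s) : Finpartition s :=
  (P.avoid {a}).copy (by rw [Finset.insert_sdiff_of_mem _ (mem_singleton_self a),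
    Finset.sdiff_singleton_eq_erase, Finset.erase_eq_of_notMem ha])

lemma amem : a ∈ insert a s := mem_insert_self a s

lemma not_mem_of_ne_part (P : Finpartition (insert a s)) {d : Finset α}
    (hd : d ∈ P.parts) (hne : d ≠ P.part a) : a ∉ d := fun h =>
  hne (P.part_eq_of_mem hd h).symm

lemma erasePt_parts_of_single (P : Finpartition (insert a s)) (ha : a ∉ s)
    (h : P.part a = {a}) : (erasePt P ha).parts = P.parts.erase {a} := by
  ext c
  simp only [erasePt, Finpartition.copy_parts, Finpartition.mem_avoid, mem_erase]
  constructor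
  · rintro ⟨d, hd, hd2, rfl⟩
    have hda : d ≠ {a} := fun he => hd2 (by simp [he])
    have : a ∉ d := not_mem_of_ne_part P hd (h ▸ hda)
    rw [Finset.sdiff_singleton_eq_erase, Finset.erase_eq_of_notMem this]
    exact ⟨hda, hd⟩
  · rintro ⟨hc1, hc2⟩
    have : a ∉ c := not_mem_of_ne_part P hc2 (h ▸ hc1)
    refine ⟨c, hc2, ?_, ?_⟩
    · intro hsub
      rcases Finset.subset_singleton_iff.1 hsub with rfl | rfl
      · exact empty_not_mem _ hc2
      · exact hc1 rfl
    · rw [Finset.sdiff_singleton_eq_erase, Finset.erase_eq_of_notMem this]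

lemma erasePt_parts_of_not_single (P : Finpartition (insert a s)) (ha : a ∉ s)
    (h : P.part a ≠ {a}) :
    (erasePt P ha).parts = insert ((P.part a).erase a) (P.parts.erase (P.part a)) := by
  have hpm : P.part a ∈ P.parts := P.part_mem.2 amem
  ext c
  simp only [erasePt, Finpartition.copy_parts, Finpartition.mem_avoid, mem_insert, mem_erase]
  constructor
  · rintro ⟨d, hd, hd2, rfl⟩
    by_cases hdp : d = P.part a
    · subst hdp
      exact Or.inl (by rw [Finset.sdiff_singleton_eq_erase])
    · have : a ∉ d := not_mem_of_ne_part P hd hdp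
      rw [Finset.sdiff_singleton_eq_erase, Finset.erase_eq_of_notMem this]
      exact Or.inr ⟨hdp, hd⟩
  · rintro (rfl | ⟨hc1, hc2⟩)
    · refine ⟨P.part a, hpm, ?_, by rw [Finset.sdiff_singleton_eq_erase]⟩
      intro hsub
      rcases Finset.subset_singleton_iff.1 hsub with he | he
      · exact empty_not_mem _ (he ▸ hpm)
      · exact h he
    · have : a ∉ c := not_mem_of_ne_part P hc2 hc1
      refine ⟨c, hc2, ?_, ?_⟩
      · intro hsub
        rcases Finset.subset_singleton_iff.1 hsub with rfl | rfl
        · exact empty_not_mem _ hc2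
        · exact this (mem_singleton_self a)
      · rw [Finset.sdiff_singleton_eq_erase, Finset.erase_eq_of_notMem this]

lemma part_erase_not_mem (P : Finpartition (insert a s)) (h : P.part a ≠ {a}) :
    (P.part a).erase a ∉ P.parts.erase (P.part a) := by
  intro hmem
  have hpm : P.part a ∈ P.parts := P.part_mem.2 amem
  have hae : a ∈ P.part a := P.mem_part amem
  have hns : ¬ P.part a ⊆ {a} := by
    intro hsub
    rcases Finset.subset_singleton_iff.1 hsub with he | he
    · exact empty_not_mem _ (he ▸ hpm)
    · exact h he
  obtain ⟨b, hb, hba⟩ := Finset.not_subset.1 hns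
  have hb : b ∈ (P.part a).erase a := Finset.mem_erase.2 ⟨by simpa using hba, hb⟩
  have h1 : (P.part a).erase a ≠ P.part a := (Finset.mem_erase.1 hmem).1
  have := Finset.disjoint_left.1
    (P.disjoint (Finset.mem_of_mem_erase hmem) hpm h1) hb (Finset.mem_of_mem_erase hb)
  exact this

/-- The key equivalence for the Stirling recurrence. -/
def partEquiv (ha : a ∉ s) (j : ℕ) :
    {P : Finpartition (insert a s) // P.parts.card = j + 1} ≃
      ({x : Finpartition s × Finset α // x.1.parts.card = j + 1 ∧ x.2 ∈ x.1.parts} ⊕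
        {Q : Finpartition s // Q.parts.card = j}) where
  toFun P :=
    if h : P.1.part a = {a} then
      Sum.inr ⟨erasePt P.1 ha, by
        rw [erasePt_parts_of_single P.1 ha h, card_erase_of_mem (h ▸ P.1.part_mem.2 amem), P.2]
        omega⟩
    else
      Sum.inl ⟨(erasePt P.1 ha, (P.1.part a).erase a), by
        refine ⟨?_, ?_⟩
        · rw [erasePt_parts_of_not_single P.1 ha h,
            card_insert_of_notMem (part_erase_not_mem P.1 h),
            card_erase_of_mem (P.1.part_mem.2 amem), P.2]
          omega
        · rw [erasePt_parts_of_not_single P.1 ha h]; exact mem_insert_self _ _⟩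
  invFun x :=
    match x with
    | Sum.inl ⟨(Q, t), h⟩ => ⟨insertPart Q ha t h.2, by rw [card_insertPart Q ha t h.2, h.1]⟩
    | Sum.inr ⟨Q, h⟩ => ⟨insertSingle Q ha, by rw [card_insertSingle Q ha, h]⟩
  left_inv := by
    rintro ⟨P, hP⟩
    by_cases h : P.part a = {a}
    · simp only [dif_pos h]
      apply Subtype.ext
      apply Finpartition.ext
      rw [insertSingle_parts, erasePt_parts_of_single P ha h, ← h,
        Finset.insert_erase (P.part_mem.2 amem)]
    · simp only [dif_neg h]
      apply Subtype.ext
      apply Finpartition.ext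
      rw [insertPart_parts, erasePt_parts_of_not_single P ha h,
        Finset.erase_insert (part_erase_not_mem P h),
        Finset.insert_erase (P.mem_part amem), Finset.insert_erase (P.part_mem.2 amem)]
  right_inv := by
    rintro (⟨⟨Q, t⟩, h1, h2⟩ | ⟨Q, h⟩)
    · have hta : a ∉ t := fun hat => ha (part_subset Q h2 hat)
      have hmem : insert a t ∈ (insertPart Q ha t h2).parts := by
        rw [insertPart_parts]; exact mem_insert_self _ _
      have hp : (insertPart Q ha t h2).part a = insert a t :=
        Finpartition.part_eq_of_mem _ hmem (mem_insert_self a t)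
      obtain ⟨b, hb⟩ := Q.nonempty_of_mem_parts h2
      have hba : b ≠ a := fun he => hta (he ▸ hb)
      have hne : (insertPart Q ha t h2).part a ≠ {a} := by
        rw [hp]
        intro he
        have : b ∈ ({a} : Finset α) := he ▸ mem_insert_of_mem hb
        exact hba (mem_singleton.1 this)
      simp only [dif_neg hne]
      congr 1
      apply Subtype.ext
      apply Prod.ext
      · apply Finpartition.ext
        rw [erasePt_parts_of_not_single _ ha hne, hp, Finset.erase_insert hta,
          insertPart_parts, Finset.erase_insert (insert_not_mem_erase Q ha t),
          Finset.insert_erase h2]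
      · show ((insertPart Q ha t h2).part a).erase a = t
        rw [hp, Finset.erase_insert hta]
    · have hmem : ({a} : Finset α) ∈ (insertSingle Q ha).parts := by
        rw [insertSingle_parts]; exact mem_insert_self _ _
      have hp : (insertSingle Q ha).part a = {a} :=
        Finpartition.part_eq_of_mem _ hmem (mem_singleton_self a)
      simp only [dif_pos hp]
      congr 1
      apply Subtype.ext
      apply Finpartition.ext
      rw [erasePt_parts_of_single _ ha hp, insertSingle_parts,
        Finset.erase_insert (single_not_mem Q ha)]

/-- Number of partitions of `s` into exactly `j` parts. -/
noncomputable def numParts (s : Finset α) (j : ℕ) : ℕ :=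
  Nat.card {P : Finpartition s // P.parts.card = j}

/-- Auxiliary sigma equivalence. -/
def sigmaEquiv (s : Finset α) (j : ℕ) :
    {x : Finpartition s × Finset α // x.1.parts.card = j + 1 ∧ x.2 ∈ x.1.parts} ≃
      Σ Q : {Q : Finpartition s // Q.parts.card = j + 1}, {t // t ∈ Q.1.parts} where
  toFun x := ⟨⟨x.1.1, x.2.1⟩, ⟨x.1.2, x.2.2⟩⟩
  invFun y := ⟨(y.1.1, y.2.1), ⟨y.1.2, y.2.2⟩⟩
  left_inv x := rfl
  right_inv y := rfl

lemma card_pairs (s : Finset α) (j : ℕ) :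
    Nat.card {x : Finpartition s × Finset α // x.1.parts.card = j + 1 ∧ x.2 ∈ x.1.parts} =
      (j + 1) * numParts s (j + 1) := by
  rw [Nat.card_congr (sigmaEquiv s j), Nat.card_eq_fintype_card, Fintype.card_sigma]
  calc ∑ Q : {Q : Finpartition s // Q.parts.card = j + 1}, Fintype.card {t // t ∈ Q.1.parts}
      = ∑ _Q : {Q : Finpartition s // Q.parts.card = j + 1}, (j + 1) := by
        refine Finset.sum_congr rfl fun Q _ => ?_
        rw [Fintype.card_coe, Q.2]
    _ = (j + 1) * numParts s (j + 1) := by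
        rw [Finset.sum_const, smul_eq_mul, numParts, Nat.card_eq_fintype_card,
          Finset.card_univ, mul_comm]

lemma numParts_insert (ha : a ∉ s) (j : ℕ) :
    numParts (insert a s) (j + 1) = (j + 1) * numParts s (j + 1) + numParts s j := by
  have : Finite {x : Finpartition s × Finset α // x.1.parts.card = j + 1 ∧ x.2 ∈ x.1.parts} :=
    Finite.of_equiv _ (sigmaEquiv s j).symm
  rw [numParts, Nat.card_congr (partEquiv ha j), Nat.card_sum, card_pairs, numParts, numParts]

lemma numParts_zero_of_nonempty (s : Finset α) (hs : s.Nonempty) : numParts s 0 = 0 := by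
  refine Nat.card_eq_zero.2 (Or.inl ⟨fun P => ?_⟩)
  have h1 := Finset.card_eq_zero.1 P.2
  have h2 := Finpartition.parts_eq_empty_iff.1 h1
  exact hs.ne_empty (by simpa using h2)

lemma numParts_empty (j : ℕ) : numParts (∅ : Finset α) j = stirling 0 j := by
  have h0 : ∀ P : Finpartition (∅ : Finset α), P.parts = ∅ := fun P =>
    Finpartition.parts_eq_empty_iff.2 rfl
  cases j with
  | zero =>
    rw [show stirling 0 0 = 1 from rfl]
    refine Nat.card_eq_one_iff_unique.2 ⟨⟨fun P Q => ?_⟩,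
      ⟨⟨⊥, by rw [Finpartition.card_bot]; simp⟩⟩⟩
    apply Subtype.ext; apply Finpartition.ext; rw [h0, h0]
  | succ j =>
    refine Nat.card_eq_zero.2 (Or.inl ⟨fun P => ?_⟩)
    have := P.2
    rw [h0 P.1] at this
    simp at this

theorem numParts_eq_stirling (s : Finset α) : ∀ j, numParts s j = stirling s.card j := by
  induction s using Finset.induction_on with
  | empty => intro j; simpa using numParts_empty j
  | @insert a s ha ih =>
    intro j
    cases j with
    | zero =>
      rw [numParts_zero_of_nonempty _ (insert_nonempty a s), card_insert_of_notMem ha]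
      rfl
    | succ j =>
      rw [numParts_insert ha j, ih, ih, card_insert_of_notMem ha]
      rfl

end StirlingAux

namespace BMM

open StirlingAux


open Finset

variable {n : ℕ}

lemma not_adj_ll (i j : Fin n) : ¬ (bipartiteMinusMatching n).Adj (Sum.inl i) (Sum.inl j) := by
  simp [bipartiteMinusMatching]

lemma not_adj_rr (i j : Fin n) : ¬ (bipartiteMinusMatching n).Adj (Sum.inr i) (Sum.inr j) := by
  simp [bipartiteMinusMatching]

lemma adj_lr (i j : Fin n) : (bipartiteMinusMatching n).Adj (Sum.inl i) (Sum.inr j) ↔ i ≠ j := by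
  constructor
  · rintro ⟨-, h | h⟩
    · exact h
    · exact absurd h not_false
  · exact fun h => ⟨by simp, Or.inl h⟩

lemma adj_rl (i j : Fin n) : (bipartiteMinusMatching n).Adj (Sum.inr i) (Sum.inl j) ↔ j ≠ i := by
  rw [SimpleGraph.adj_comm, adj_lr]

abbrev embL : Fin n ↪ (Fin n ⊕ Fin n) := ⟨Sum.inl, Sum.inl_injective⟩
abbrev embR : Fin n ↪ (Fin n ⊕ Fin n) := ⟨Sum.inr, Sum.inr_injective⟩

/-- The `U`-side vertices with index outside `T`. -/
def sideA (T : Finset (Fin n)) : Finset (Fin n ⊕ Fin n) := Tᶜ.map embL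

/-- The `V`-side vertices with index outside `T`. -/
def sideB (T : Finset (Fin n)) : Finset (Fin n ⊕ Fin n) := Tᶜ.map embR

lemma mem_sideA {T : Finset (Fin n)} {z : Fin n ⊕ Fin n} :
    z ∈ sideA T ↔ ∃ i, i ∉ T ∧ z = Sum.inl i := by
  simp [sideA, eq_comm]

lemma mem_sideB {T : Finset (Fin n)} {z : Fin n ⊕ Fin n} :
    z ∈ sideB T ↔ ∃ i, i ∉ T ∧ z = Sum.inr i := by
  simp [sideB, eq_comm]

lemma card_sideA (T : Finset (Fin n)) : (sideA T).card = n - T.card := by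
  simp [sideA, Finset.card_compl]

lemma card_sideB (T : Finset (Fin n)) : (sideB T).card = n - T.card := by
  simp [sideB, Finset.card_compl]

/-- A set of vertices is independent. -/
def Ind (p : Finset (Fin n ⊕ Fin n)) : Prop :=
  ∀ a ∈ p, ∀ b ∈ p, ¬ (bipartiteMinusMatching n).Adj a b

/-- The set of indices whose pair `{uᵢ, vᵢ}` lies in one part. -/
def Tof (P : Finpartition (Finset.univ : Finset (Fin n ⊕ Fin n))) : Finset (Fin n) :=
  univ.filter fun i => Sum.inr i ∈ P.part (Sum.inl i)

lemma mem_Tof {P : Finpartition (Finset.univ : Finset (Fin n ⊕ Fin n))} {i : Fin n} :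
    i ∈ Tof P ↔ Sum.inr i ∈ P.part (Sum.inl i) := by
  simp [Tof]

section Structure

variable {P : Finpartition (Finset.univ : Finset (Fin n ⊕ Fin n))}
  (hP : ∀ p ∈ P.parts, Ind p)

include hP

lemma part_of_mem_Tof {i : Fin n} (hi : i ∈ Tof P) :
    P.part (Sum.inl i) = {Sum.inl i, Sum.inr i} := by
  rw [mem_Tof] at hi
  have hpm := P.part_mem.2 (mem_univ (Sum.inl i))
  have hind := hP _ hpm
  apply subset_antisymm
  · intro z hz
    match z with
    | Sum.inl j =>
      rcases eq_or_ne j i with rfl | hne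
      · exact mem_insert_self _ _
      · exact absurd ((BMM.adj_lr j i).2 hne) (hind _ hz _ hi)
    | Sum.inr j =>
      rcases eq_or_ne j i with rfl | hne
      · exact mem_insert_of_mem (mem_singleton_self _)
      · exact absurd ((BMM.adj_lr i j).2 (Ne.symm hne))
          (hind _ (P.mem_part (mem_univ _)) _ hz)
  · rw [Finset.insert_subset_iff]
    exact ⟨P.mem_part (mem_univ _), by simpa using hi⟩

lemma pair_mem_parts {i : Fin n} (hi : i ∈ Tof P) :
    ({Sum.inl i, Sum.inr i} : Finset (Fin n ⊕ Fin n)) ∈ P.parts :=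
  part_of_mem_Tof hP hi ▸ P.part_mem.2 (mem_univ _)

lemma partL_subset {i : Fin n} (hi : i ∉ Tof P) : P.part (Sum.inl i) ⊆ sideA (Tof P) := by
  rw [mem_Tof] at hi
  have hpm := P.part_mem.2 (mem_univ (Sum.inl i))
  have hind := hP _ hpm
  intro z hz
  match z with
  | Sum.inl j =>
    rw [mem_sideA]
    refine ⟨j, fun hj => ?_, rfl⟩
    rw [mem_Tof] at hj
    have : P.part (Sum.inl j) = P.part (Sum.inl i) :=
      P.eq_of_mem_parts (P.part_mem.2 (mem_univ _)) hpm (P.mem_part (mem_univ _)) hz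
    rw [this] at hj
    rcases eq_or_ne j i with rfl | hne
    · exact hi hj
    · exact hind _ (P.mem_part (mem_univ _)) _ hj ((BMM.adj_lr i j).2 (Ne.symm hne))
  | Sum.inr j =>
    rcases eq_or_ne j i with rfl | hne
    · exact absurd hz hi
    · exact absurd ((BMM.adj_lr i j).2 (Ne.symm hne))
        (hind _ (P.mem_part (mem_univ _)) _ hz)

lemma partR_subset {i : Fin n} (hi : i ∉ Tof P) : P.part (Sum.inr i) ⊆ sideB (Tof P) := by
  have hpm := P.part_mem.2 (mem_univ (Sum.inr i))
  have hind := hP _ hpm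
  have hmem := P.mem_part (mem_univ (Sum.inr i))
  have hinl : ∀ j : Fin n, Sum.inl j ∈ P.part (Sum.inr i) → False := by
    intro j hj
    rcases eq_or_ne j i with rfl | hne
    · have : P.part (Sum.inl j) = P.part (Sum.inr j) :=
        P.eq_of_mem_parts (P.part_mem.2 (mem_univ _)) hpm (P.mem_part (mem_univ _)) hj
      exact hi (mem_Tof.2 (this ▸ hmem))
    · exact hind _ hj _ hmem ((BMM.adj_lr j i).2 hne)
  intro z hz
  match z with
  | Sum.inl j => exact absurd hz (fun h => hinl j h)
  | Sum.inr j =>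
    rw [mem_sideB]
    refine ⟨j, fun hj => ?_, rfl⟩
    have hpair := part_of_mem_Tof hP hj
    have : P.part (Sum.inr i) = P.part (Sum.inl j) := by
      refine P.eq_of_mem_parts hpm (P.part_mem.2 (mem_univ _)) hz ?_
      rw [hpair]
      exact mem_insert_of_mem (mem_singleton_self _)
    exact hinl j (by rw [this, hpair]; exact mem_insert_self _ _)

lemma parts_trichotomy {p : Finset (Fin n ⊕ Fin n)} (hp : p ∈ P.parts) :
    (∃ i ∈ Tof P, p = {Sum.inl i, Sum.inr i}) ∨ p ⊆ sideA (Tof P) ∨ p ⊆ sideB (Tof P) := by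
  obtain ⟨z, hz⟩ := P.nonempty_of_mem_parts hp
  match z with
  | Sum.inl i =>
    have hpart : P.part (Sum.inl i) = p := P.part_eq_of_mem hp hz
    by_cases hi : i ∈ Tof P
    · exact Or.inl ⟨i, hi, by rw [← hpart, part_of_mem_Tof hP hi]⟩
    · exact Or.inr (Or.inl (hpart ▸ partL_subset hP hi))
  | Sum.inr i =>
    have hpart : P.part (Sum.inr i) = p := P.part_eq_of_mem hp hz
    by_cases hi : i ∈ Tof P
    · refine Or.inl ⟨i, hi, ?_⟩
      have hpair := pair_mem_parts hP hi
      exact P.eq_of_mem_parts hp hpair hz (mem_insert_of_mem (mem_singleton_self _))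
    · exact Or.inr (Or.inr (hpart ▸ partR_subset hP hi))

lemma parts_decomp :
    P.parts = ((Tof P).image fun i => {Sum.inl i, Sum.inr i}) ∪
      P.parts.filter (· ⊆ sideA (Tof P)) ∪ P.parts.filter (· ⊆ sideB (Tof P)) := by
  ext p
  simp only [mem_union, mem_image, mem_filter]
  constructor
  · intro hp
    rcases parts_trichotomy hP hp with ⟨i, hi, rfl⟩ | h | h
    · exact Or.inl (Or.inl ⟨i, hi, rfl⟩)
    · exact Or.inl (Or.inr ⟨hp, h⟩)
    · exact Or.inr ⟨hp, h⟩
  · rintro ((⟨i, hi, rfl⟩ | ⟨hp, -⟩) | ⟨hp, -⟩)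
    · exact pair_mem_parts hP hi
    · exact hp
    · exact hp

lemma sup_filterA :
    (P.parts.filter (· ⊆ sideA (Tof P))).sup id = sideA (Tof P) := by
  refine subset_antisymm (fun z hz => ?_) (fun z hz => ?_)
  · obtain ⟨p, hp, hzp⟩ := Finset.mem_sup.1 hz
    exact (mem_filter.1 hp).2 hzp
  · obtain ⟨i, hi, rfl⟩ := mem_sideA.1 hz
    refine Finset.mem_sup.2 ⟨P.part (Sum.inl i), ?_, P.mem_part (mem_univ _)⟩
    exact mem_filter.2 ⟨P.part_mem.2 (mem_univ _), partL_subset hP hi⟩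

lemma sup_filterB :
    (P.parts.filter (· ⊆ sideB (Tof P))).sup id = sideB (Tof P) := by
  refine subset_antisymm (fun z hz => ?_) (fun z hz => ?_)
  · obtain ⟨p, hp, hzp⟩ := Finset.mem_sup.1 hz
    exact (mem_filter.1 hp).2 hzp
  · obtain ⟨i, hi, rfl⟩ := mem_sideB.1 hz
    refine Finset.mem_sup.2 ⟨P.part (Sum.inr i), ?_, P.mem_part (mem_univ _)⟩
    exact mem_filter.2 ⟨P.part_mem.2 (mem_univ _), partR_subset hP hi⟩

end Structure

/-- Cardinality of a three-fold union of pairs, `A`-parts and `B`-parts. -/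
lemma card_three_union (T : Finset (Fin n)) (X Y : Finset (Finset (Fin n ⊕ Fin n)))
    (hX : ∀ p ∈ X, p ⊆ sideA T ∧ p.Nonempty) (hY : ∀ p ∈ Y, p ⊆ sideB T ∧ p.Nonempty) :
    ((T.image fun i => {Sum.inl i, Sum.inr i}) ∪ X ∪ Y).card = T.card + X.card + Y.card := by
  have hpairX : ∀ i ∈ T, ({Sum.inl i, Sum.inr i} : Finset (Fin n ⊕ Fin n)) ∉ X := by
    intro i _ hmem
    obtain ⟨j, hj, hje⟩ := mem_sideA.1 ((hX _ hmem).1 (mem_insert_of_mem (mem_singleton_self _)))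
    exact absurd hje (by simp)
  have hpairY : ∀ i ∈ T, ({Sum.inl i, Sum.inr i} : Finset (Fin n ⊕ Fin n)) ∉ Y := by
    intro i _ hmem
    obtain ⟨j, hj, hje⟩ := mem_sideB.1 ((hY _ hmem).1 (mem_insert_self _ _))
    exact absurd hje (by simp)
  have hXY : Disjoint X Y := by
    rw [Finset.disjoint_left]
    intro p hpX hpY
    obtain ⟨z, hz⟩ := (hX _ hpX).2
    obtain ⟨i, -, rfl⟩ := mem_sideA.1 ((hX _ hpX).1 hz)
    obtain ⟨j, -, hje⟩ := mem_sideB.1 ((hY _ hpY).1 hz)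
    exact absurd hje (by simp)
  have hd1 : Disjoint (T.image fun i => ({Sum.inl i, Sum.inr i} : Finset (Fin n ⊕ Fin n))) X := by
    rw [Finset.disjoint_left]
    rintro p hp hpX
    obtain ⟨i, hi, rfl⟩ := mem_image.1 hp
    exact hpairX i hi hpX
  have hd2 : Disjoint (T.image fun i => ({Sum.inl i, Sum.inr i} : Finset (Fin n ⊕ Fin n))) Y := by
    rw [Finset.disjoint_left]
    rintro p hp hpY
    obtain ⟨i, hi, rfl⟩ := mem_image.1 hp
    exact hpairY i hi hpY
  rw [Finset.card_union_of_disjoint (Finset.disjoint_union_left.2 ⟨hd2, hXY⟩),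
    Finset.card_union_of_disjoint hd1, Finset.card_image_of_injective _ ?_]
  intro i j hij
  simp only at hij
  have : Sum.inl i ∈ ({Sum.inl j, Sum.inr j} : Finset (Fin n ⊕ Fin n)) := by
    rw [← hij]; exact mem_insert_self _ _
  simpa using this

section Assemble

variable (T : Finset (Fin n)) (P₁ : Finpartition (sideA T)) (P₂ : Finpartition (sideB T))

/-- Assemble a partition of the whole vertex set from pairs indexed by `T` and partitions
of the two sides. -/
def assemble : Finpartition (Finset.univ : Finset (Fin n ⊕ Fin n)) where
  parts := ((T.image fun i => {Sum.inl i, Sum.inr i}) ∪ P₁.parts ∪ P₂.parts)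
  supIndep := by
    rw [Finset.supIndep_iff_pairwiseDisjoint]
    have pairA : ∀ i ∈ T, ∀ p ⊆ sideA T,
        Disjoint ({Sum.inl i, Sum.inr i} : Finset (Fin n ⊕ Fin n)) p := by
      intro i hi p hp
      rw [Finset.disjoint_left]
      intro z hz hzp
      obtain ⟨j, hj, rfl⟩ := mem_sideA.1 (hp hzp)
      rcases mem_insert.1 hz with he | he
      · exact hj (by rw [show j = i from by simpa using he]; exact hi)
      · simp at he
    have pairB : ∀ i ∈ T, ∀ p ⊆ sideB T,
        Disjoint ({Sum.inl i, Sum.inr i} : Finset (Fin n ⊕ Fin n)) p := by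
      intro i hi p hp
      rw [Finset.disjoint_left]
      intro z hz hzp
      obtain ⟨j, hj, rfl⟩ := mem_sideB.1 (hp hzp)
      rcases mem_insert.1 hz with he | he
      · simp at he
      · exact hj (by rw [show j = i from by simpa using he]; exact hi)
    have hAB : ∀ p ⊆ sideA T, ∀ q ⊆ sideB T, Disjoint p q := by
      intro p hp q hq
      rw [Finset.disjoint_left]
      intro z hzp hzq
      obtain ⟨j, -, rfl⟩ := mem_sideA.1 (hp hzp)
      obtain ⟨j', -, hje⟩ := mem_sideB.1 (hq hzq)
      exact absurd hje (by simp)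
    intro x hx y hy hxy
    simp only [coe_union, Set.mem_union, mem_coe, mem_image] at hx hy
    rcases hx with (⟨i, hi, rfl⟩ | hx) | hx
    · rcases hy with (⟨j, hj, rfl⟩ | hy) | hy
      · show Disjoint _ _
        rw [Finset.disjoint_left]
        intro z hz hz'
        have hij : i ≠ j := fun he => hxy (by rw [he])
        rcases mem_insert.1 hz with rfl | hz <;> rcases mem_insert.1 hz' with he | he <;>
          simp_all
      · exact pairA i hi _ (P₁.le hy)
      · exact pairB i hi _ (P₂.le hy)
    · rcases hy with (⟨j, hj, rfl⟩ | hy) | hy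
      · exact (pairA j hj _ (P₁.le hx)).symm
      · exact P₁.disjoint hx hy hxy
      · exact hAB _ (P₁.le hx) _ (P₂.le hy)
    · rcases hy with (⟨j, hj, rfl⟩ | hy) | hy
      · exact (pairB j hj _ (P₂.le hx)).symm
      · exact (hAB _ (P₁.le hy) _ (P₂.le hx)).symm
      · exact P₂.disjoint hx hy hxy
  sup_parts := by
    apply Finset.eq_univ_of_forall
    intro z
    rw [Finset.mem_sup]
    match z with
    | Sum.inl i =>
      by_cases hi : i ∈ T
      · exact ⟨{Sum.inl i, Sum.inr i}, by
          simp only [mem_union, mem_image]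
          exact Or.inl (Or.inl ⟨i, hi, rfl⟩), mem_insert_self _ _⟩
      · obtain ⟨p, hp, hzp⟩ := P₁.exists_mem (mem_sideA.2 ⟨i, hi, rfl⟩)
        exact ⟨p, by simp only [mem_union]; exact Or.inl (Or.inr hp), hzp⟩
    | Sum.inr i =>
      by_cases hi : i ∈ T
      · exact ⟨{Sum.inl i, Sum.inr i}, by
          simp only [mem_union, mem_image]
          exact Or.inl (Or.inl ⟨i, hi, rfl⟩), mem_insert_of_mem (mem_singleton_self _)⟩
      · obtain ⟨p, hp, hzp⟩ := P₂.exists_mem (mem_sideB.2 ⟨i, hi, rfl⟩)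
        exact ⟨p, by simp only [mem_union]; exact Or.inr hp, hzp⟩
  bot_notMem := by
    simp only [Finset.bot_eq_empty, mem_union, mem_image, not_or]
    refine ⟨⟨?_, fun h => P₁.bot_notMem h⟩, fun h => P₂.bot_notMem h⟩
    rintro ⟨i, -, h⟩
    exact (Finset.insert_ne_empty _ _) h

lemma assemble_parts :
    (assemble T P₁ P₂).parts =
      (T.image fun i => {Sum.inl i, Sum.inr i}) ∪ P₁.parts ∪ P₂.parts := rfl

lemma assemble_card :
    (assemble T P₁ P₂).parts.card = T.card + P₁.parts.card + P₂.parts.card := by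
  rw [assemble_parts]
  exact card_three_union T _ _
    (fun p hp => ⟨P₁.le hp, P₁.nonempty_of_mem_parts hp⟩)
    (fun p hp => ⟨P₂.le hp, P₂.nonempty_of_mem_parts hp⟩)

lemma assemble_proper : ∀ p ∈ (assemble T P₁ P₂).parts, Ind p := by
  intro p hp
  rw [assemble_parts] at hp
  simp only [mem_union, mem_image] at hp
  rcases hp with (⟨i, hi, rfl⟩ | hp) | hp
  · intro a ha b hb
    rcases mem_insert.1 ha with rfl | ha <;> rcases mem_insert.1 hb with rfl | hb <;>
      simp_all [BMM.not_adj_ll, BMM.not_adj_rr, BMM.adj_lr, BMM.adj_rl,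
        SimpleGraph.irrefl]
  · intro a ha b hb
    obtain ⟨i, -, rfl⟩ := mem_sideA.1 (P₁.le hp ha)
    obtain ⟨j, -, rfl⟩ := mem_sideA.1 (P₁.le hp hb)
    exact BMM.not_adj_ll i j
  · intro a ha b hb
    obtain ⟨i, -, rfl⟩ := mem_sideB.1 (P₂.le hp ha)
    obtain ⟨j, -, rfl⟩ := mem_sideB.1 (P₂.le hp hb)
    exact BMM.not_adj_rr i j

lemma Tof_assemble : Tof (assemble T P₁ P₂) = T := by
  ext i
  rw [mem_Tof]
  constructor
  · intro h
    by_contra hi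
    obtain ⟨p, hp, hzp⟩ := P₁.exists_mem (mem_sideA.2 ⟨i, hi, rfl⟩)
    have hp' : p ∈ (assemble T P₁ P₂).parts := by
      rw [assemble_parts]
      exact mem_union_left _ (mem_union_right _ hp)
    have := (assemble T P₁ P₂).part_eq_of_mem hp' hzp
    rw [this] at h
    obtain ⟨j, -, hje⟩ := mem_sideA.1 (P₁.le hp h)
    exact absurd hje (by simp)
  · intro hi
    have hp' : ({Sum.inl i, Sum.inr i} : Finset (Fin n ⊕ Fin n)) ∈
        (assemble T P₁ P₂).parts := by
      rw [assemble_parts]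
      exact mem_union_left _ (mem_union_left _ (mem_image.2 ⟨i, hi, rfl⟩))
    rw [(assemble T P₁ P₂).part_eq_of_mem hp' (mem_insert_self _ _)]
    exact mem_insert_of_mem (mem_singleton_self _)

lemma assemble_filterA :
    (assemble T P₁ P₂).parts.filter (· ⊆ sideA T) = P₁.parts := by
  rw [assemble_parts]
  ext p
  simp only [mem_filter, mem_union, mem_image]
  constructor
  · rintro ⟨(⟨i, hi, rfl⟩ | hp) | hp, hsub⟩
    · obtain ⟨j, -, hje⟩ := mem_sideA.1 (hsub (mem_insert_of_mem (mem_singleton_self _)))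
      exact absurd hje (by simp)
    · exact hp
    · obtain ⟨z, hz⟩ := P₂.nonempty_of_mem_parts hp
      obtain ⟨j, -, rfl⟩ := mem_sideB.1 (P₂.le hp hz)
      obtain ⟨j', -, hje⟩ := mem_sideA.1 (hsub hz)
      exact absurd hje (by simp)
  · intro hp
    exact ⟨Or.inl (Or.inr hp), P₁.le hp⟩

lemma assemble_filterB :
    (assemble T P₁ P₂).parts.filter (· ⊆ sideB T) = P₂.parts := by
  rw [assemble_parts]
  ext p
  simp only [mem_filter, mem_union, mem_image]
  constructor
  · rintro ⟨(⟨i, hi, rfl⟩ | hp) | hp, hsub⟩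
    · obtain ⟨j, -, hje⟩ := mem_sideB.1 (hsub (mem_insert_self _ _))
      exact absurd hje (by simp)
    · obtain ⟨z, hz⟩ := P₁.nonempty_of_mem_parts hp
      obtain ⟨j, -, rfl⟩ := mem_sideA.1 (P₁.le hp hz)
      obtain ⟨j', -, hje⟩ := mem_sideB.1 (hsub hz)
      exact absurd hje (by simp)
    · exact hp
  · intro hp
    exact ⟨Or.inr hp, P₂.le hp⟩

end Assemble

section Disassemble

variable (P : Finpartition (Finset.univ : Finset (Fin n ⊕ Fin n)))
  (hP : ∀ p ∈ P.parts, Ind p)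

/-- The partition induced on the `U`-side. -/
def disassembleA : Finpartition (sideA (Tof P)) :=
  P.ofSubset (filter_subset _ _) (sup_filterA hP)

/-- The partition induced on the `V`-side. -/
def disassembleB : Finpartition (sideB (Tof P)) :=
  P.ofSubset (filter_subset _ _) (sup_filterB hP)

lemma disassembleA_parts :
    (disassembleA P hP).parts = P.parts.filter (· ⊆ sideA (Tof P)) := rfl

lemma disassembleB_parts :
    (disassembleB P hP).parts = P.parts.filter (· ⊆ sideB (Tof P)) := rfl

lemma card_decomp :
    P.parts.card = (Tof P).card + (disassembleA P hP).parts.card +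
      (disassembleB P hP).parts.card := by
  conv_lhs => rw [parts_decomp hP]
  rw [disassembleA_parts, disassembleB_parts]
  exact card_three_union _ _ _
    (fun p hp => ⟨(mem_filter.1 hp).2, P.nonempty_of_mem_parts (mem_filter.1 hp).1⟩)
    (fun p hp => ⟨(mem_filter.1 hp).2, P.nonempty_of_mem_parts (mem_filter.1 hp).1⟩)

end Disassemble

/-- The fiber over `T` of the map sending a proper partition to its set of matched pairs. -/
def fiberEquiv (k : ℕ) (T : Finset (Fin n)) :
    {P : {P : Finpartition (Finset.univ : Finset (Fin n ⊕ Fin n)) //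
        (∀ p ∈ P.parts, Ind p) ∧ P.parts.card = k} // Tof P.1 = T} ≃
      {PQ : Finpartition (sideA T) × Finpartition (sideB T) //
        T.card + PQ.1.parts.card + PQ.2.parts.card = k} where
  toFun P := ⟨((disassembleA P.1.1 P.1.2.1).copy (congrArg sideA P.2),
      (disassembleB P.1.1 P.1.2.1).copy (congrArg sideB P.2)), by
    have hc := card_decomp P.1.1 P.1.2.1
    have hk := P.1.2.2
    have hT : (Tof P.1.1).card = T.card := by rw [P.2]
    show T.card + ((disassembleA P.1.1 P.1.2.1).copy (congrArg sideA P.2)).parts.card +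
      ((disassembleB P.1.1 P.1.2.1).copy (congrArg sideB P.2)).parts.card = k
    rw [Finpartition.copy_parts, Finpartition.copy_parts]
    omega⟩
  invFun PQ := ⟨⟨assemble T PQ.1.1 PQ.1.2,
    assemble_proper T _ _, by rw [assemble_card]; exact PQ.2⟩, Tof_assemble T _ _⟩
  left_inv := by
    rintro ⟨⟨P, hP, hk⟩, hT⟩
    simp only at hT
    subst hT
    apply Subtype.ext
    apply Subtype.ext
    apply Finpartition.ext
    rw [assemble_parts]
    simp only [Finpartition.copy_parts, disassembleA_parts, disassembleB_parts]
    exact (parts_decomp hP).symm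
  right_inv := by
    rintro ⟨⟨P₁, P₂⟩, hc⟩
    have hT := Tof_assemble T P₁ P₂
    apply Subtype.ext
    apply Prod.ext
    · apply Finpartition.ext
      simp only [Finpartition.copy_parts, disassembleA_parts]
      rw [hT]
      exact assemble_filterA T P₁ P₂
    · apply Finpartition.ext
      simp only [Finpartition.copy_parts, disassembleB_parts]
      rw [hT]
      exact assemble_filterB T P₁ P₂

end BMM


namespace BMM

open StirlingAux

/-- Summing an indicator over a range. -/
lemma indicator_sum (m a b : ℕ) :
    (∑ j ∈ Finset.range (m + 1),
      (if a = j then 1 else 0) * (if b = m - j then 1 else 0)) =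
      if a + b = m then 1 else 0 := by
  simp only [ite_mul, one_mul, zero_mul]
  rw [Finset.sum_ite_eq]
  simp only [Finset.mem_range]
  split_ifs <;> omega

lemma card_subtype_eq_sum {Z : Type*} [Fintype Z] (p : Z → Prop) [DecidablePred p] :
    Nat.card {z // p z} = ∑ z : Z, if p z then 1 else 0 := by
  rw [Nat.card_eq_fintype_card, Fintype.card_subtype, Finset.card_filter]

/-- Counting pairs with a prescribed sum of statistics. -/
lemma key_count {X Y : Type*} [Fintype X] [Fintype Y] (f : X → ℕ) (g : Y → ℕ) (m : ℕ) :
    Nat.card {xy : X × Y // f xy.1 + g xy.2 = m} =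
      ∑ j ∈ Finset.range (m + 1), Nat.card {x // f x = j} * Nat.card {y // g y = m - j} := by
  rw [card_subtype_eq_sum]
  simp_rw [card_subtype_eq_sum]
  rw [Fintype.sum_prod_type]
  have hpt : ∀ (x : X) (y : Y), (if f x + g y = m then (1 : ℕ) else 0) =
      ∑ j ∈ Finset.range (m + 1), (if f x = j then 1 else 0) * (if g y = m - j then 1 else 0) :=
    fun x y => (indicator_sum m (f x) (g y)).symm
  simp_rw [hpt]
  rw [show (∑ j ∈ Finset.range (m + 1),
        (∑ x : X, if f x = j then (1:ℕ) else 0) * (∑ y : Y, if g y = m - j then 1 else 0)) =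
      ∑ j ∈ Finset.range (m + 1), ∑ x : X, ∑ y : Y,
        (if f x = j then (1:ℕ) else 0) * (if g y = m - j then 1 else 0) from
    Finset.sum_congr rfl fun j _ => Finset.sum_mul_sum _ _ _ _]
  have h1 : ∀ x : X, (∑ y : Y, ∑ j ∈ Finset.range (m + 1),
      (if f x = j then (1:ℕ) else 0) * (if g y = m - j then 1 else 0)) =
      ∑ j ∈ Finset.range (m + 1), ∑ y : Y,
        (if f x = j then (1:ℕ) else 0) * (if g y = m - j then 1 else 0) :=
    fun x => Finset.sum_comm
  simp_rw [h1]
  exact Finset.sum_comm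

end BMM

namespace BMM

lemma card_fiber (n k : ℕ) (T : Finset (Fin n)) :
    Nat.card {P : {P : Finpartition (Finset.univ : Finset (Fin n ⊕ Fin n)) //
        (∀ p ∈ P.parts, Ind p) ∧ P.parts.card = k} // Tof P.1 = T} =
      (if n ≤ k + (n - T.card) then
        ∑ j ∈ Finset.range (k + (n - T.card) - n + 1),
          stirling (n - T.card) j * stirling (n - T.card) (k + (n - T.card) - n - j)
      else 0) := by
  rw [Nat.card_congr (fiberEquiv k T)]
  have htn : T.card ≤ n := by
    have := Finset.card_le_univ T
    simpa using this
  by_cases hk : T.card ≤ k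
  · have hcond : n ≤ k + (n - T.card) := by omega
    rw [if_pos hcond]
    have e : {PQ : Finpartition (sideA T) × Finpartition (sideB T) //
        T.card + PQ.1.parts.card + PQ.2.parts.card = k} ≃
        {PQ : Finpartition (sideA T) × Finpartition (sideB T) //
          PQ.1.parts.card + PQ.2.parts.card = k - T.card} :=
      Equiv.subtypeEquivRight (fun PQ => by omega)
    refine (Nat.card_congr e).trans
      ((key_count (fun P : Finpartition (sideA T) => P.parts.card)
        (fun P : Finpartition (sideB T) => P.parts.card) (k - T.card)).trans ?_)
    have hm : k - T.card = k + (n - T.card) - n := by omega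
    rw [← hm]
    refine Finset.sum_congr rfl fun j _ => ?_
    have h1 : Nat.card {x : Finpartition (sideA T) // x.parts.card = j} =
        stirling (n - T.card) j := by
      have := StirlingAux.numParts_eq_stirling (sideA T) j
      rw [card_sideA] at this
      exact this
    have h2 : Nat.card {y : Finpartition (sideB T) // y.parts.card = k - T.card - j} =
        stirling (n - T.card) (k - T.card - j) := by
      have := StirlingAux.numParts_eq_stirling (sideB T) (k - T.card - j)
      rw [card_sideB] at this
      exact this
    rw [h1, h2]
  · rw [if_neg (by omega)]
    refine Nat.card_eq_zero.2 (Or.inl ⟨fun PQ => ?_⟩)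
    have := PQ.2
    omega

lemma sum_over_subsets (n : ℕ) (G : ℕ → ℕ) :
    ∑ T : Finset (Fin n), G T.card = ∑ t ∈ Finset.range (n + 1), n.choose t * G t := by
  rw [← Finset.powerset_univ, Finset.sum_powerset_apply_card]
  refine Finset.sum_congr (by simp) fun t ht => ?_
  rw [smul_eq_mul, Finset.card_univ, Fintype.card_fin]

end BMM

theorem stirling_bipartiteMinusMatching (n k : ℕ) :
    Nat.card {P : Finpartition (Finset.univ : Finset (Fin n ⊕ Fin n)) //
        (∀ p ∈ P.parts, ∀ a ∈ p, ∀ b ∈ p, ¬ (bipartiteMinusMatching n).Adj a b) ∧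
        P.parts.card = k} =
      ∑ s ∈ Finset.range (n + 1), n.choose s *
        (if n ≤ k + s then
          ∑ j ∈ Finset.range (k + s - n + 1), stirling s j * stirling s (k + s - n - j)
        else 0) := by
  classical
  show Nat.card {P : Finpartition (Finset.univ : Finset (Fin n ⊕ Fin n)) //
      (∀ p ∈ P.parts, BMM.Ind p) ∧ P.parts.card = k} = _
  rw [Nat.card_congr (Equiv.sigmaFiberEquiv
    (fun P : {P : Finpartition (Finset.univ : Finset (Fin n ⊕ Fin n)) //
      (∀ p ∈ P.parts, BMM.Ind p) ∧ P.parts.card = k} => BMM.Tof P.1)).symm]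
  rw [Nat.card_eq_fintype_card, Fintype.card_sigma]
  have hfib : ∀ T : Finset (Fin n),
      Fintype.card {P : {P : Finpartition (Finset.univ : Finset (Fin n ⊕ Fin n)) //
        (∀ p ∈ P.parts, BMM.Ind p) ∧ P.parts.card = k} // BMM.Tof P.1 = T} =
      (if n ≤ k + (n - T.card) then
        ∑ j ∈ Finset.range (k + (n - T.card) - n + 1),
          stirling (n - T.card) j * stirling (n - T.card) (k + (n - T.card) - n - j)
      else 0) := fun T => by
    rw [← Nat.card_eq_fintype_card, BMM.card_fiber n k T]
  simp_rw [hfib]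
  rw [BMM.sum_over_subsets n (fun t =>
    if n ≤ k + (n - t) then
      ∑ j ∈ Finset.range (k + (n - t) - n + 1),
        stirling (n - t) j * stirling (n - t) (k + (n - t) - n - j)
    else 0)]
  rw [← Finset.sum_range_reflect]
  refine Finset.sum_congr rfl fun s hs => ?_
  rw [Finset.mem_range] at hs
  have hsn : s ≤ n := by omega
  have h1 : n + 1 - 1 - s = n - s := by omega
  rw [h1, Nat.choose_symm hsn]
  congr 1
  have h2 : n - (n - s) = s := by omega
  rw [h2]
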